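/- For a symmetric real n×n matrix M and indices a, b, the matrices obtained from M by deleting row and column a, respectively row and column b, have the same characteristic polynomial if and only if (M^k)_{a,a} = (M^k)_{b,b} for all natural numbers k. -/

import Mathlib

open Matrix

/-- `M \ a` : the matrix obtained from `M` by deleting the row and column indexed by `a`. -/
noncomputable def Mdel {n : ℕ} (M : Matrix (Fin n) (Fin n) ℝ) (a : Fin n) :
    Matrix {i : Fin n // i ≠ a} {i : Fin n // i ≠ a} ℝ :=
  M.submatrix Subtype.val Subtype.val

open Polynomial Finset in
lemma adjugate_diag_eq {n : ℕ} {R : Type*} [CommRing R] (X : Matrix (Fin n) (Fin n) R) (a : Fin n) :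
    adjugate X a a = (X.submatrix (Subtype.val : {i : Fin n // i ≠ a} → Fin n) Subtype.val).det := by
  rw [adjugate_apply]
  let e : ({i : Fin n // i ≠ a} ⊕ Unit) ≃ Fin n :=
    { toFun := Sum.elim Subtype.val (fun _ => a)
      invFun := fun i => if h : i = a then Sum.inr () else Sum.inl ⟨i, h⟩
      left_inv := by
        rintro (⟨i, hi⟩ | ⟨⟩)
        · simp [hi]
        · simp
      right_inv := by intro i; by_cases h : i = a <;> simp [h] }
  rw [← det_submatrix_equiv_self e]
  have : (X.updateRow a (Pi.single a 1)).submatrix e e =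
      fromBlocks (X.submatrix Subtype.val Subtype.val) (fun i _ => X i.val a) 0 1 := by
    ext i j
    rcases i with i | i <;> rcases j with j | j
    · have hi := i.2
      simp [e, fromBlocks, updateRow_apply, hi]
    · have hi := i.2
      simp [e, fromBlocks, updateRow_apply, hi]
    · have hj := j.2
      simp [e, fromBlocks, updateRow_apply, Pi.single_apply, hj, Ne.symm hj]
    · simp [e, fromBlocks, updateRow_apply, Pi.single_apply]
  rw [this]
  exact (det_fromBlocks_zero₂₁ _ _ _).trans (by rw [det_one, mul_one])

open Polynomial Finset in
lemma charmatrix_del {n : ℕ} (M : Matrix (Fin n) (Fin n) ℝ) (a : Fin n) :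
    charmatrix (Mdel M a) =
      (charmatrix M).submatrix (Subtype.val : {i : Fin n // i ≠ a} → Fin n) Subtype.val := by
  ext i j
  by_cases h : i = j
  · subst h
    simp [charmatrix_apply_eq, Mdel]
  · have h' : (i : Fin n) ≠ (j : Fin n) := fun hv => h (Subtype.ext hv)
    simp [charmatrix_apply_ne _ _ _ h, charmatrix_apply_ne _ _ _ h', Mdel]

open Polynomial Finset in
lemma key_expand {n : ℕ} (M : Matrix (Fin n) (Fin n) ℝ) (a : Fin n) :
    adjugate (charmatrix M) a a =
      ∑ k ∈ range n,
        (∑ j ∈ Finset.Ico (k + 1) (n + 1), C (M.charpoly.coeff j) * X ^ (j - k - 1)) *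
          C ((M ^ k) a a) := by
  set p := M.charpoly with hp
  have hdeg : p.natDegree = n := by
    rw [hp, M.charpoly_natDegree_eq_dim, Fintype.card_fin]
  have hmon : p.Monic := M.charpoly_monic
  have hcn : p.coeff n = 1 := by
    have := hmon.coeff_natDegree
    rwa [hdeg] at this
  set N : Matrix (Fin n) (Fin n) ℝ[X] := M.map C with hN
  have hpow : ∀ k : ℕ, N ^ k = (M ^ k).map C := by
    intro k
    rw [hN, ← RingHom.mapMatrix_apply, ← map_pow, RingHom.mapMatrix_apply]
  set Q : ℕ → ℝ[X] := fun k => ∑ j ∈ Finset.Ico k (n + 1), C (p.coeff j) * X ^ (j - k) with hQ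
  set B : Matrix (Fin n) (Fin n) ℝ[X] := ∑ k ∈ range n, Q (k + 1) • N ^ k with hB
  -- Cayley-Hamilton mapped to R[X]
  have hCH : ∑ k ∈ range (n + 1), C (p.coeff k) • N ^ k = 0 := by
    have h0 : ∑ i ∈ range (n + 1), p.coeff i • M ^ i = 0 := by
      have := Polynomial.aeval_eq_sum_range (R := ℝ) (p := p) M
      rw [Matrix.aeval_self_charpoly] at this
      rw [hdeg] at this
      exact this.symm
    have h1 := congrArg (fun A => (C : ℝ →+* ℝ[X]).mapMatrix A) h0
    simp only [map_sum, map_zero] at h1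
    rw [← h1]
    refine Finset.sum_congr rfl fun k _ => ?_
    refine Matrix.ext fun i j => ?_
    simp only [RingHom.mapMatrix_apply, Matrix.map_apply, Matrix.smul_apply, hpow,
      smul_eq_mul, ← Polynomial.C_mul]
  have hQtop : Q n = 1 := by
    rw [hQ]
    simp only
    rw [show Finset.Ico n (n+1) = {n} by rw [Nat.Ico_succ_singleton], Finset.sum_singleton]
    simp [hcn]
  have hQ0 : Q 0 = p := by
    have h2 : p = ∑ i ∈ range (n + 1), C (p.coeff i) * X ^ i := by
      simpa [C_mul_X_pow_eq_monomial] using p.as_sum_range' (n + 1) (by omega)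
    rw [hQ]
    simp only [Nat.sub_zero]
    conv_rhs => rw [h2]
    rw [Finset.range_eq_Ico]
  have hXQ : ∀ k, k ≤ n → X * Q (k + 1) = Q k - C (p.coeff k) := by
    intro k hk
    rw [hQ]
    simp only
    rw [Finset.mul_sum]
    have h3 : ∑ j ∈ Finset.Ico k (n + 1), C (p.coeff j) * X ^ (j - k)
        = C (p.coeff k) + ∑ j ∈ Finset.Ico (k + 1) (n + 1), C (p.coeff j) * X ^ (j - k) := by
      rw [Finset.sum_eq_sum_Ico_succ_bot (by omega)]
      simp
    rw [h3, add_sub_cancel_left]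
    refine Finset.sum_congr rfl fun j hj => ?_
    rw [Finset.mem_Ico] at hj
    have h4 : j - k = (j - (k + 1)) + 1 := by omega
    rw [h4, pow_succ]
    ring
  have hprod : charmatrix M * B = p • (1 : Matrix (Fin n) (Fin n) ℝ[X]) := by
    rw [charmatrix, sub_mul, hB, Finset.mul_sum, Finset.mul_sum]
    have lhs1 : ∀ k ∈ range n, Matrix.scalar (Fin n) (X : ℝ[X]) * (Q (k + 1) • N ^ k)
        = Q k • N ^ k - C (p.coeff k) • N ^ k := by
      intro k hk
      rw [Finset.mem_range] at hk
      rw [scalar_apply, ← smul_eq_diagonal_mul, smul_smul, hXQ k (by omega), sub_smul]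
    have lhs2 : ∀ k ∈ range n, (C : ℝ →+* ℝ[X]).mapMatrix M * (Q (k + 1) • N ^ k)
        = Q (k + 1) • N ^ (k + 1) := by
      intro k _
      rw [RingHom.mapMatrix_apply, ← hN, mul_smul_comm, ← pow_succ']
    rw [Finset.sum_congr rfl lhs1, Finset.sum_congr rfl lhs2, Finset.sum_sub_distrib]
    have tele : ∑ k ∈ range n, Q k • N ^ k - ∑ k ∈ range n, Q (k + 1) • N ^ (k + 1)
        = Q 0 • N ^ 0 - Q n • N ^ n := by
      rw [← Finset.sum_sub_distrib, Finset.sum_range_sub' (fun k => Q k • N ^ k)]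
    have hrest : ∑ k ∈ range n, C (p.coeff k) • N ^ k = - (N ^ n) := by
      have := hCH
      rw [Finset.sum_range_succ, hcn, Polynomial.C_1, one_smul] at this
      exact eq_neg_of_add_eq_zero_left this
    rw [hrest]
    rw [show ∀ A B C : Matrix (Fin n) (Fin n) ℝ[X], A - B - C = A - C - B from
      fun A B C => by abel]
    rw [tele, hQ0, hQtop, pow_zero, one_smul, sub_neg_eq_add, sub_add_cancel]
  -- uniqueness of adjugate, extract entry
  have hpne : p ≠ 0 := hmon.ne_zero
  have hdetc : (charmatrix M).det = p := rfl
  have h5 : charmatrix M * B = charmatrix M * adjugate (charmatrix M) := by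
    rw [Matrix.mul_adjugate, hdetc, hprod]
  have h6 : p • B = p • adjugate (charmatrix M) := by
    have := congrArg (fun A => adjugate (charmatrix M) * A) h5
    simpa only [← Matrix.mul_assoc, Matrix.adjugate_mul, hdetc, Matrix.smul_mul,
      Matrix.one_mul] using this
  have h7 : B a a = adjugate (charmatrix M) a a := by
    have := congrArg (fun A : Matrix (Fin n) (Fin n) ℝ[X] => A a a) h6
    simp only [Matrix.smul_apply, smul_eq_mul] at this
    exact mul_left_cancel₀ hpne this
  rw [← h7, hB]
  rw [Matrix.sum_apply]
  refine Finset.sum_congr rfl fun k _ => ?_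
  rw [Matrix.smul_apply, hpow k, Matrix.map_apply, smul_eq_mul, hQ]
  simp only
  congr 1

open Polynomial Finset in
/-- For a symmetric real `n × n` matrix `M` and distinct indices `a, b`, the deleted
matrices `M \ a` and `M \ b` have the same characteristic polynomial iff
`(M ^ k) a a = (M ^ k) b b` for all `k`. -/
theorem cospectral_iff_walk_counts {n : ℕ} (hn : 2 ≤ n)
    (M : Matrix (Fin n) (Fin n) ℝ) (hM : M.IsSymm) (a b : Fin n) (hab : a ≠ b) :
    (Mdel M a).charpoly = (Mdel M b).charpoly ↔
      ∀ k : ℕ, (M ^ k) a a = (M ^ k) b b := by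
  set p := M.charpoly with hp
  have hdeg : p.natDegree = n := by
    rw [hp, M.charpoly_natDegree_eq_dim, Fintype.card_fin]
  have hmon : p.Monic := M.charpoly_monic
  have hcn : p.coeff n = 1 := by
    have := hmon.coeff_natDegree
    rwa [hdeg] at this
  have hdel : ∀ c : Fin n, (Mdel M c).charpoly = adjugate (charmatrix M) c c := by
    intro c
    rw [Matrix.charpoly, charmatrix_del, ← adjugate_diag_eq]
  rw [hdel a, hdel b, key_expand M a, key_expand M b]
  set q : ℕ → ℝ[X] := fun k =>
    ∑ j ∈ Finset.Ico (k + 1) (n + 1), C (p.coeff j) * X ^ (j - k - 1) with hq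
  constructor
  · -- hard direction
    intro h k
    -- first, the difference d satisfies ∑ q k * C (d k) = 0
    set d : ℕ → ℝ := fun k => (M ^ k) a a - (M ^ k) b b with hd
    have hsum : ∑ k ∈ range n, q k * C (d k) = 0 := by
      have := sub_eq_zero_of_eq h
      rw [← Finset.sum_sub_distrib] at this
      rw [← this]
      refine Finset.sum_congr rfl fun k _ => ?_
      rw [hd]
      simp only [map_sub]
      ring
    -- coefficient facts about q
    have hqcoeff_self : ∀ m : ℕ, m < n → (q m).coeff (n - 1 - m) = 1 := by
      intro m hm
      rw [hq]
      simp only [finset_sum_coeff, coeff_C_mul, coeff_X_pow]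
      rw [Finset.sum_eq_single_of_mem n (by rw [Finset.mem_Ico]; omega)]
      · simp [hcn, show n - 1 - m = n - m - 1 by omega]
      · intro j hj hjn
        rw [Finset.mem_Ico] at hj
        rw [if_neg (by omega), mul_zero]
    have hqcoeff_gt : ∀ k m : ℕ, m < k → m < n → (q k).coeff (n - 1 - m) = 0 := by
      intro k m hmk hm
      rw [hq]
      simp only [finset_sum_coeff, coeff_C_mul, coeff_X_pow]
      refine Finset.sum_eq_zero fun j hj => ?_
      rw [Finset.mem_Ico] at hj
      rw [if_neg (by omega), mul_zero]
    -- all differences vanish for k < n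
    have hdz : ∀ m : ℕ, m < n → d m = 0 := by
      intro m
      induction m using Nat.strong_induction_on with
      | _ m ih =>
        intro hm
        have hco := congrArg (fun f : ℝ[X] => f.coeff (n - 1 - m)) hsum
        simp only [finset_sum_coeff, coeff_mul_C, coeff_zero] at hco
        rw [Finset.sum_eq_single_of_mem m (Finset.mem_range.mpr hm)] at hco
        · rw [hqcoeff_self m hm, one_mul] at hco
          exact hco
        · intro k hk hkm
          rcases lt_or_gt_of_ne hkm with hlt | hgt
          · rw [ih k hlt (by omega), mul_zero]
          · rw [hqcoeff_gt k m hgt hm, zero_mul]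
    -- extend to all k via Cayley-Hamilton recursion
    have hCH : ∑ i ∈ range (n + 1), p.coeff i • M ^ i = 0 := by
      have := Polynomial.aeval_eq_sum_range (R := ℝ) (p := p) M
      rw [Matrix.aeval_self_charpoly] at this
      rw [hdeg] at this
      exact this.symm
    have hMn : M ^ n = -∑ j ∈ range n, p.coeff j • M ^ j := by
      rw [Finset.sum_range_succ, hcn, one_smul] at hCH
      exact eq_neg_of_add_eq_zero_right hCH
    clear hsum hq
    induction k using Nat.strong_induction_on with
    | _ k ih =>
      by_cases hk : k < n
      · have := hdz k hk
        rw [hd] at this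
        simpa [sub_eq_zero] using this
      · push_neg at hk
        have hsplit : M ^ k = M ^ (k - n) * M ^ n := by
          rw [← pow_add]
          congr 1
          omega
        rw [hsplit, hMn, Matrix.mul_neg, Matrix.mul_sum]
        simp only [Matrix.neg_apply, Matrix.sum_apply]
        congr 1
        refine Finset.sum_congr rfl fun j hj => ?_
        rw [Finset.mem_range] at hj
        rw [Matrix.mul_smul, ← pow_add]
        simp only [Matrix.smul_apply, smul_eq_mul]
        congr 1
        exact ih (k - n + j) (by omega)
  · intro h
    exact Finset.sum_congr rfl fun k _ => by rw [h k]
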